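/- arXiv:0911.3464 — 4 statements merged into one kernel-verified Lean document; each statement's English description precedes it below -/
import Mathlib

section
/- Let A be a complete normed unital ℝ-algebra and φ : ℝ → A a continuous map. Then there is exactly one differentiable map g : ℝ → A with g(0) = 1 and deriv g t = g(t)·φ(t) for all t ∈ ℝ; moreover this solution satisfies that g(t) is a unit of A for every t ∈ ℝ. -/
set_option maxHeartbeats 1000000
open Set intervalIntegral MeasureTheory

section LinearODE

variable {E : Type*} [NormedAddCommGroup E] [NormedSpace ℝ E] [CompleteSpace E]

/-- Picard iterates for the linear ODE `x' = L t x`, `x 0 = x₀`. -/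
noncomputable def picIter (L : ℝ → E →L[ℝ] E) (x₀ : E) : ℕ → ℝ → E
  | 0 => fun _ => x₀
  | n + 1 => fun t => ∫ s in (0:ℝ)..t, L s (picIter L x₀ n s)

variable {L : ℝ → E →L[ℝ] E} (hL : Continuous L) (x₀ : E)

include hL in
lemma picIter_continuous : ∀ n, Continuous (picIter L x₀ n) := by
  intro n
  induction n with
  | zero => exact continuous_const
  | succ n ih =>
      have h : Continuous fun s => L s (picIter L x₀ n s) := hL.clm_apply ih
      exact continuous_iff_continuousAt.2 fun t =>
        (h.integral_hasStrictDerivAt 0 t).hasDerivAt.continuousAt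

lemma norm_intervalIntegral_le_pow {f : ℝ → E} (hf : Continuous f) {c : ℝ} {n : ℕ} {t : ℝ}
    (h : ∀ s ∈ Set.uIcc (0:ℝ) t, ‖f s‖ ≤ c * |s| ^ n) :
    ‖∫ s in (0:ℝ)..t, f s‖ ≤ c * |t| ^ (n + 1) / (n + 1) := by
  rcases le_total 0 t with ht | ht
  · rw [uIcc_of_le ht] at h
    calc ‖∫ s in (0:ℝ)..t, f s‖ ≤ ∫ s in (0:ℝ)..t, ‖f s‖ :=
          intervalIntegral.norm_integral_le_integral_norm ht
      _ ≤ ∫ s in (0:ℝ)..t, c * s ^ n := by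
          apply intervalIntegral.integral_mono_on ht (hf.norm.intervalIntegrable _ _)
            ((continuous_const.mul (continuous_pow n)).intervalIntegrable _ _)
          intro s hs
          have := h s hs
          rwa [abs_of_nonneg hs.1] at this
      _ = c * |t| ^ (n + 1) / (n + 1) := by
          rw [intervalIntegral.integral_const_mul, integral_pow, abs_of_nonneg ht]
          ring
  · rw [uIcc_of_ge ht] at h
    rw [intervalIntegral.integral_symm, norm_neg]
    calc ‖∫ s in t..(0:ℝ), f s‖ ≤ ∫ s in t..(0:ℝ), ‖f s‖ :=
          intervalIntegral.norm_integral_le_integral_norm ht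
      _ ≤ ∫ s in t..(0:ℝ), c * (-s) ^ n := by
          apply intervalIntegral.integral_mono_on ht (hf.norm.intervalIntegrable _ _)
            ((continuous_const.mul (continuous_neg.pow n)).intervalIntegrable _ _)
          intro s hs
          have := h s hs
          rwa [abs_of_nonpos hs.2] at this
      _ = c * |t| ^ (n + 1) / (n + 1) := by
          rw [intervalIntegral.integral_const_mul]
          have : (∫ s in t..(0:ℝ), (-s) ^ n) = ∫ s in (0:ℝ)..(-t), s ^ n := by
            simpa using intervalIntegral.integral_comp_neg (a := t) (b := 0)
              (fun s => s ^ n)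
          rw [this, integral_pow, abs_of_nonpos ht]
          ring

include hL in
lemma picIter_norm_le {R C : ℝ} (hC0 : 0 ≤ C) (hC : ∀ s ∈ Icc (-R) R, ‖L s‖ ≤ C) :
    ∀ n, ∀ t ∈ Icc (-R) R, ‖picIter L x₀ n t‖ ≤ ‖x₀‖ * (C ^ n * |t| ^ n / n.factorial) := by
  intro n
  induction n with
  | zero => intro t _; simp [picIter]
  | succ n ih =>
      intro t htR
      have hR0 : 0 ≤ R := by
        have := htR.1; have := htR.2; linarith
      have hsub : Set.uIcc (0:ℝ) t ⊆ Icc (-R) R :=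
        Set.uIcc_subset_Icc ⟨by linarith, hR0⟩ htR
      have key : ∀ s ∈ Set.uIcc (0:ℝ) t,
          ‖L s (picIter L x₀ n s)‖ ≤ (‖x₀‖ * C ^ (n+1) / n.factorial) * |s| ^ n := by
        intro s hs
        have hsR := hsub hs
        calc ‖L s (picIter L x₀ n s)‖ ≤ ‖L s‖ * ‖picIter L x₀ n s‖ :=
              (L s).le_opNorm _
          _ ≤ C * (‖x₀‖ * (C ^ n * |s| ^ n / n.factorial)) := by
              apply mul_le_mul (hC s hsR) (ih s hsR) (norm_nonneg _)  hC0
          _ = (‖x₀‖ * C ^ (n+1) / n.factorial) * |s| ^ n := by ring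
      have := norm_intervalIntegral_le_pow (hL.clm_apply (picIter_continuous hL x₀ n)) key (t := t)
      calc ‖picIter L x₀ (n+1) t‖ ≤ (‖x₀‖ * C ^ (n+1) / n.factorial) * |t| ^ (n+1) / (n+1) := this
        _ = ‖x₀‖ * (C ^ (n+1) * |t| ^ (n+1) / (n+1).factorial) := by
            rw [Nat.factorial_succ]
            push_cast
            have h1 : (n.factorial:ℝ) ≠ 0 := by positivity
            have h2 : (n:ℝ)+1 ≠ 0 := by positivity
            field_simp

/-- The solution of the linear ODE, as a Dyson/Picard series. -/
noncomputable def linSol (L : ℝ → E →L[ℝ] E) (x₀ : E) (t : ℝ) : E :=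
  ∑' n, picIter L x₀ n t

include hL in
lemma exists_bound (R : ℝ) : ∃ C : ℝ, 0 ≤ C ∧ ∀ s ∈ Icc (-R) R, ‖L s‖ ≤ C := by
  obtain ⟨C, hC⟩ := isCompact_Icc.exists_bound_of_continuousOn (hL.continuousOn (s := Icc (-R) R))
  exact ⟨max C 0, le_max_right _ _, fun s hs => (hC s hs).trans (le_max_left _ _)⟩

lemma summable_aux (c : ℝ) (x₀ : E) : Summable fun n : ℕ => ‖x₀‖ * (c ^ n / n.factorial) :=
  (Real.summable_pow_div_factorial c).mul_left _

include hL in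
lemma picIter_summable (t : ℝ) : Summable fun n => picIter L x₀ n t := by
  obtain ⟨C, hC0, hC⟩ := exists_bound hL |t|
  apply Summable.of_norm_bounded (summable_aux (C * |t|) x₀)
  intro n
  have := picIter_norm_le hL x₀ hC0 hC n t (by simp [abs_nonneg, neg_abs_le, le_abs_self])
  calc ‖picIter L x₀ n t‖ ≤ ‖x₀‖ * (C ^ n * |t| ^ n / n.factorial) := this
    _ = ‖x₀‖ * ((C * |t|) ^ n / n.factorial) := by rw [mul_pow]

include hL in
lemma linSol_continuous : Continuous (linSol L x₀) := by
  rw [continuous_iff_continuousAt]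
  intro t₀
  set R : ℝ := |t₀| + 1 with hR
  obtain ⟨C, hC0, hC⟩ := exists_bound hL R
  have hcont : ContinuousOn (fun t => ∑' n, picIter L x₀ n t) (Icc (-R) R) := by
    apply continuousOn_tsum (u := fun n => ‖x₀‖ * ((C * R) ^ n / n.factorial))
      (fun n => (picIter_continuous hL x₀ n).continuousOn) (summable_aux _ _)
    intro n t ht
    have := picIter_norm_le hL x₀ hC0 hC n t ht
    refine this.trans ?_
    have h1 : |t| ≤ R := abs_le.2 ⟨ht.1, ht.2⟩
    have h2 : C ^ n * |t| ^ n ≤ (C * R) ^ n := by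
      rw [mul_pow]
      exact mul_le_mul_of_nonneg_left
        (pow_le_pow_left₀ (abs_nonneg t) h1 n) (pow_nonneg hC0 n)
    apply mul_le_mul_of_nonneg_left _ (norm_nonneg x₀)
    exact (div_le_div_iff_of_pos_right (by positivity : (0:ℝ) < n.factorial)).mpr h2
  have hmem : Icc (-R) R ∈ nhds t₀ := by
    apply Icc_mem_nhds <;> [linarith [neg_abs_le t₀]; linarith [le_abs_self t₀]]
  exact hcont.continuousAt hmem

include hL in
lemma linSol_eq (t : ℝ) :
    linSol L x₀ t = x₀ + ∫ s in (0:ℝ)..t, L s (linSol L x₀ s) := by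
  set F : ℕ → C(ℝ, E) := fun n =>
    ⟨fun s => L s (picIter L x₀ n s), hL.clm_apply (picIter_continuous hL x₀ n)⟩ with hF
  obtain ⟨C, hC0, hC⟩ := exists_bound hL |t|
  have hsub : Set.uIcc (0:ℝ) t ⊆ Icc (-|t|) |t| := by
    apply Set.uIcc_subset_Icc (by simp [abs_nonneg]) (by simp [neg_abs_le, le_abs_self])
  have hFnorm : ∀ n, ‖(F n).restrict (⟨Set.uIcc 0 t, isCompact_uIcc⟩ : TopologicalSpace.Compacts ℝ)‖
      ≤ ‖x₀‖ * (C * ((C * |t|) ^ n / n.factorial)) := by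
    intro n
    apply ContinuousMap.norm_le _ (by positivity) |>.2
    rintro ⟨s, hs⟩
    have hsR := hsub hs
    calc ‖L s (picIter L x₀ n s)‖ ≤ ‖L s‖ * ‖picIter L x₀ n s‖ := (L s).le_opNorm _
      _ ≤ C * (‖x₀‖ * (C ^ n * |s| ^ n / n.factorial)) :=
          mul_le_mul (hC s hsR) (picIter_norm_le hL x₀ hC0 hC n s hsR) (norm_nonneg _) hC0
      _ ≤ ‖x₀‖ * (C * ((C * |t|) ^ n / n.factorial)) := by
          have h1 : |s| ≤ |t| := abs_le.2 ⟨hsR.1, hsR.2⟩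
          have h2 : C ^ n * |s| ^ n ≤ (C * |t|) ^ n := by
            rw [mul_pow]
            exact mul_le_mul_of_nonneg_left
              (pow_le_pow_left₀ (abs_nonneg s) h1 n) (pow_nonneg hC0 n)
          have := mul_le_mul_of_nonneg_left
            ((div_le_div_iff_of_pos_right (by positivity : (0:ℝ) < n.factorial)).mpr h2) hC0
          nlinarith [norm_nonneg x₀, this]
  have hsum : Summable fun n =>
      ‖(F n).restrict (⟨Set.uIcc 0 t, isCompact_uIcc⟩ : TopologicalSpace.Compacts ℝ)‖ := by
    apply Summable.of_nonneg_of_le (fun n => norm_nonneg _) hFnorm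
    exact ((Real.summable_pow_div_factorial (C * |t|)).mul_left C).mul_left _
  have hs := hasSum_intervalIntegral_of_summable_norm (a := 0) (b := t) hsum
  have heq1 : ∀ s : ℝ, (∑' n, F n s) = L s (linSol L x₀ s) := by
    intro s
    have he : ∀ n, (F n) s = L s (picIter L x₀ n s) := fun n => rfl
    simp only [he]
    exact (ContinuousLinearMap.map_tsum (L s) (picIter_summable hL x₀ s)).symm
  have heq2 : (∫ s in (0:ℝ)..t, ∑' n, F n s) = ∫ s in (0:ℝ)..t, L s (linSol L x₀ s) := by
    apply intervalIntegral.integral_congr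
    intro s _
    exact heq1 s
  have heq3 : ∀ n, (∫ s in (0:ℝ)..t, F n s) = picIter L x₀ (n+1) t := fun n => rfl
  have := hs.tsum_eq
  rw [heq2] at this
  have hsum2 : Summable fun n => picIter L x₀ n t := picIter_summable hL x₀ t
  calc linSol L x₀ t = ∑' n, picIter L x₀ n t := rfl
    _ = picIter L x₀ 0 t + ∑' n, picIter L x₀ (n+1) t := hsum2.tsum_eq_zero_add
    _ = x₀ + ∫ s in (0:ℝ)..t, L s (linSol L x₀ s) := by
        have h4 : (∑' n, picIter L x₀ (n+1) t) = ∫ s in (0:ℝ)..t, L s (linSol L x₀ s) := by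
          rw [← this]
          exact tsum_congr fun n => (heq3 n).symm
        rw [show picIter L x₀ 0 t = x₀ from rfl, h4]

include hL in
lemma linSol_hasDerivAt (t : ℝ) :
    HasDerivAt (linSol L x₀) (L t (linSol L x₀ t)) t := by
  have hcont : Continuous fun s => L s (linSol L x₀ s) :=
    hL.clm_apply (linSol_continuous hL x₀)
  have h1 := (hasDerivAt_const t x₀).add (hcont.integral_hasStrictDerivAt 0 t).hasDerivAt
  rw [zero_add] at h1
  have : (fun u => x₀ + ∫ s in (0:ℝ)..u, L s (linSol L x₀ s)) = linSol L x₀ :=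
    funext fun u => (linSol_eq hL x₀ u).symm
  have h2 : HasDerivAt (fun u => x₀ + ∫ s in (0:ℝ)..u, L s (linSol L x₀ s)) (L t (linSol L x₀ t)) t := h1
  rwa [this] at h2

include hL in
lemma linSol_zero : linSol L x₀ 0 = x₀ := by
  have := linSol_eq hL x₀ 0
  simpa using this

include hL in
lemma linODE_unique {g₁ g₂ : ℝ → E}
    (h₁ : ∀ t, HasDerivAt g₁ (L t (g₁ t)) t)
    (h₂ : ∀ t, HasDerivAt g₂ (L t (g₂ t)) t)
    (h0 : g₁ 0 = g₂ 0) : g₁ = g₂ := by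
  funext t
  set R : ℝ := |t| + 1 with hR
  obtain ⟨C, hC0, hC⟩ := exists_bound hL R
  set clamp : ℝ → ℝ := fun s => max (-R) (min R s) with hclamp
  have hclamp_mem : ∀ s, clamp s ∈ Icc (-R) R := by
    intro s
    constructor
    · exact le_max_left _ _
    · apply max_le (by linarith [abs_nonneg t]) (min_le_left _ _)
  have hclamp_eq : ∀ s ∈ Ioo (-R) R, clamp s = s := by
    intro s hs
    simp only [hclamp]
    rw [min_eq_right hs.2.le, max_eq_right hs.1.le]
  set v : ℝ → E → E := fun s x => L (clamp s) x with hv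
  have hlip : ∀ s, LipschitzOnWith C.toNNReal (v s) univ := by
    intro s
    apply LipschitzWith.lipschitzOnWith
    apply LipschitzWith.of_dist_le_mul
    intro x y
    calc dist (L (clamp s) x) (L (clamp s) y) ≤ ‖L (clamp s)‖ * dist x y :=
          (L (clamp s)).lipschitz.dist_le_mul x y
      _ ≤ C.toNNReal * dist x y := by
          apply mul_le_mul_of_nonneg_right _ dist_nonneg
          rw [Real.coe_toNNReal C hC0]
          exact hC _ (hclamp_mem s)
  have hg₁c : ContinuousOn g₁ (Icc (-R) R) :=
    (continuous_iff_continuousAt.2 fun s => (h₁ s).continuousAt).continuousOn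
  have hg₂c : ContinuousOn g₂ (Icc (-R) R) :=
    (continuous_iff_continuousAt.2 fun s => (h₂ s).continuousAt).continuousOn
  have ht0 : (0:ℝ) ∈ Ioo (-R) R := by
    constructor <;> [linarith [abs_nonneg t]; linarith [abs_nonneg t]]
  have := ODE_solution_unique_of_mem_Icc (v := v) (s := fun _ => (univ : Set E)) (fun s _ => hlip s) ht0
    hg₁c (fun s hs => by rw [hv]; simp only []; rw [hclamp_eq s hs]; exact h₁ s)
    (fun s _ => mem_univ _)
    hg₂c (fun s hs => by rw [hv]; simp only []; rw [hclamp_eq s hs]; exact h₂ s)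
    (fun s _ => mem_univ _) h0
  exact this ⟨by linarith [neg_abs_le t], by linarith [le_abs_self t]⟩

end LinearODE

/-- Well-definedness of the Higgs-field holonomy: for a continuous `φ : ℝ → A`
with values in a Banach algebra `A`, the equation `∂g = g·φ`, `g(0) = 1` has a
unique differentiable solution, and the solution is unit-valued. -/
theorem higgs_holonomy_exists_unique
    {A : Type*} [NormedRing A] [NormedAlgebra ℝ A] [CompleteSpace A]
    (φ : ℝ → A) (hφ : Continuous φ) :
    (∃! g : ℝ → A, Differentiable ℝ g ∧ g 0 = 1 ∧ ∀ t, deriv g t = g t * φ t) ∧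
      ∀ g : ℝ → A, Differentiable ℝ g → g 0 = 1 → (∀ t, deriv g t = g t * φ t) →
        ∀ t, IsUnit (g t) := by
  -- right multiplication operator
  set Lr : ℝ → A →L[ℝ] A := fun t => (ContinuousLinearMap.mul ℝ A).flip (φ t) with hLrdef
  have hLr : Continuous Lr := (ContinuousLinearMap.mul ℝ A).flip.continuous.comp hφ
  have hLr_apply : ∀ t x, Lr t x = x * φ t := fun t x => rfl
  set g : ℝ → A := linSol Lr 1 with hgdef
  have hgD : ∀ t, HasDerivAt g (g t * φ t) t := fun t => linSol_hasDerivAt hLr 1 t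
  have hg0 : g 0 = 1 := linSol_zero hLr 1
  constructor
  · refine ⟨g, ⟨fun t => (hgD t).differentiableAt, hg0, fun t => (hgD t).deriv⟩, ?_⟩
    rintro y ⟨hyD, hy0, hy'⟩
    apply linODE_unique hLr (g₁ := y) (g₂ := g) ?_ (fun t => hgD t) (by rw [hy0, hg0])
    intro t
    have := (hyD t).hasDerivAt
    rwa [hy' t] at this
  · intro g hgD hg0 hg'
    have hgD' : ∀ t, HasDerivAt g (g t * φ t) t := fun t => by
      have := (hgD t).hasDerivAt; rwa [hg' t] at this
    -- left equation h' = -φ h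
    set Ll : ℝ → A →L[ℝ] A := fun t => -(ContinuousLinearMap.mul ℝ A (φ t)) with hLldef
    have hLl : Continuous Ll :=
      ((ContinuousLinearMap.mul ℝ A).continuous.comp hφ).neg
    set h : ℝ → A := linSol Ll 1 with hhdef
    have hhD : ∀ t, HasDerivAt h (-(φ t * h t)) t := fun t => linSol_hasDerivAt hLl 1 t
    have hh0 : h 0 = 1 := linSol_zero hLl 1
    -- g * h is constant 1
    have hgh : ∀ t, g t * h t = 1 := by
      have hu : ∀ t, HasDerivAt (fun s => g s * h s) 0 t := by
        intro t
        have := (hgD' t).mul (hhD t)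
        have e : g t * φ t * h t + g t * -(φ t * h t) = 0 := by
          rw [mul_neg, mul_assoc]; abel
        rwa [e] at this
      intro t
      have hconst : ∀ t, (fun s => g s * h s) t = (fun s => g s * h s) 0 := by
        intro t
        apply is_const_of_deriv_eq_zero (fun s => (hu s).differentiableAt)
        intro s
        exact (hu s).deriv
      have := hconst t
      simpa [hg0, hh0] using this
    -- h * g is constant 1, via the commutator ODE
    have hhg : ∀ t, h t * g t = 1 := by
      set L2 : ℝ → A →L[ℝ] A := fun t =>
        (ContinuousLinearMap.mul ℝ A).flip (φ t) - ContinuousLinearMap.mul ℝ A (φ t) with hL2def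
      have hL2 : Continuous L2 :=
        ((ContinuousLinearMap.mul ℝ A).flip.continuous.comp hφ).sub
          ((ContinuousLinearMap.mul ℝ A).continuous.comp hφ)
      have hw : ∀ t, HasDerivAt (fun s => h s * g s) (L2 t (h t * g t)) t := by
        intro t
        have := (hhD t).mul (hgD' t)
        have e : -(φ t * h t) * g t + h t * (g t * φ t) = L2 t (h t * g t) := by
          simp only [hL2def, ContinuousLinearMap.sub_apply, ContinuousLinearMap.flip_apply,
            ContinuousLinearMap.mul_apply', neg_mul, mul_assoc]
          abel
        rwa [e] at this
      have hone : ∀ t, HasDerivAt (fun _ : ℝ => (1 : A)) (L2 t ((fun _ : ℝ => (1:A)) t)) t := by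
        intro t
        have e : L2 t 1 = 0 := by
          simp [hL2def]
        rw [e]
        exact hasDerivAt_const t 1
      have := linODE_unique hL2 (g₁ := fun s => h s * g s) (g₂ := fun _ => 1) hw hone
        (by simp [hh0, hg0])
      intro t
      exact congrFun this t
    exact fun t => ⟨⟨g t, h t, hgh t, hhg t⟩, rfl⟩
end

section
/- Let A be a complete normed unital ℝ-algebra and p : ℝ → A a continuously differentiable map with p(0) = 1 and with p(t) a unit of A for every t ∈ ℝ. Then the map t ↦ p(t)⁻¹ · deriv p t is periodic with period 2π if and only if p(t + 2πn) = p(2π)^n · p(t) for every t ∈ ℝ and every n ∈ ℤ. -/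
/-- A C¹ unit-valued path `p : ℝ → A` with `p 0 = 1` has `p⁻¹ ∂p` periodic of
period `2π` if and only if `p (t + 2πn) = p(2π)ⁿ · p t` for all `t ∈ ℝ`, `n ∈ ℤ`
(quasi-periodicity characterizing the path fibration `PG`). -/
theorem inverse_deriv_periodic_iff_quasiperiodic
    {A : Type*} [NormedRing A] [NormedAlgebra ℝ A] [CompleteSpace A]
    (p : ℝ → A) (hp : ContDiff ℝ 1 p) (hp0 : p 0 = 1) (hu : ∀ t, IsUnit (p t)) :
    Function.Periodic (fun t => Ring.inverse (p t) * deriv p t) (2 * Real.pi) ↔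
      ∀ (t : ℝ) (n : ℤ),
        p (t + 2 * Real.pi * n) = (((hu (2 * Real.pi)).unit ^ n : Aˣ) : A) * p t := by
  have hdiff : Differentiable ℝ p := hp.differentiable one_ne_zero
  have hd : ∀ t, HasDerivAt p (deriv p t) t := fun t => (hdiff t).hasDerivAt
  set ip : ℝ → A := fun t => Ring.inverse (p t) with hip
  have hipl : ∀ t, ip t * p t = 1 := fun t => Ring.inverse_mul_cancel _ (hu t)
  have hipr : ∀ t, p t * ip t = 1 := fun t => Ring.mul_inverse_cancel _ (hu t)
  have hipd : ∀ t, HasDerivAt ip (-(ip t * deriv p t * ip t)) t := by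
    intro t
    have h := (hasFDerivAt_ringInverse (𝕜 := ℝ) (hu t).unit).comp_hasDerivAt t (hd t)
    convert h using 1
    · rfl
    · rfl
    simp [hip, ← Ring.inverse_unit (hu t).unit, (hu t).unit_spec]
  have hshift : ∀ t : ℝ,
      HasDerivAt (fun s => p (s + 2 * Real.pi)) (deriv p (t + 2 * Real.pi)) t := by
    intro t
    have hg : HasDerivAt (fun s : ℝ => s + 2 * Real.pi) 1 t := by
      simpa using (hasDerivAt_id t).add_const (2 * Real.pi)
    simpa [Function.comp_def] using (hd (t + 2 * Real.pi)).scomp t hg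
  constructor
  · intro hper
    -- key: p (t + 2π) = p (2π) * p t
    have key : ∀ t, p (t + 2 * Real.pi) = p (2 * Real.pi) * p t := by
      have hrd : ∀ t, HasDerivAt (fun s => p (s + 2 * Real.pi) * ip s) 0 t := by
        intro t
        have h := (hshift t).mul (hipd t)
        have hper' : ip (t + 2 * Real.pi) * deriv p (t + 2 * Real.pi)
            = ip t * deriv p t := hper t
        have hder : deriv p (t + 2 * Real.pi) = p (t + 2 * Real.pi) * (ip t * deriv p t) := by
          rw [← hper', ← mul_assoc, hipr, one_mul]
        convert h using 1
        · rfl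
        rw [hder]
        simp [mul_assoc]
      have hconst : ∀ t, p (t + 2 * Real.pi) * ip t = p (0 + 2 * Real.pi) * ip 0 := by
        intro t
        have hD : Differentiable ℝ (fun s => p (s + 2 * Real.pi) * ip s) :=
          fun s => (hrd s).differentiableAt
        exact is_const_of_deriv_eq_zero hD (fun s => (hrd s).deriv) t 0
      intro t
      have h0 : p (0 + 2 * Real.pi) * ip 0 = p (2 * Real.pi) := by
        simp [hip, hp0]
      have h' : p (t + 2 * Real.pi) * ip t = p (2 * Real.pi) := by
        rw [hconst t, h0]
      calc p (t + 2 * Real.pi) = p (t + 2 * Real.pi) * ip t * p t := by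
            rw [mul_assoc, hipl, mul_one]
        _ = p (2 * Real.pi) * p t := by rw [h']
    set u : Aˣ := (hu (2 * Real.pi)).unit with hu2
    have hus : (u : A) = p (2 * Real.pi) := (hu (2 * Real.pi)).unit_spec
    intro t n
    induction n using Int.induction_on with
    | zero => simp
    | succ n ih =>
        push_cast at ih ⊢
        have e : t + 2 * Real.pi * ((n : ℝ) + 1) = (t + 2 * Real.pi * n) + 2 * Real.pi := by
          ring
        rw [e, key, ih, ← hus, ← mul_assoc, ← Units.val_mul]
        have hpow : u * u ^ (n : ℤ) = u ^ ((n : ℤ) + 1) := by group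
        rw [hpow]
    | pred n ih =>
        push_cast at ih ⊢
        have h3 := key (t + 2 * Real.pi * (-(n : ℝ) - 1))
        have e : t + 2 * Real.pi * (-(n : ℝ) - 1) + 2 * Real.pi
            = t + 2 * Real.pi * (-(n : ℝ)) := by ring
        rw [e, ih, ← hus] at h3
        have h4 := congrArg (fun x => (↑(u⁻¹) : A) * x) h3
        simp only [← mul_assoc, Units.inv_mul, one_mul] at h4
        rw [← h4, ← Units.val_mul]
        have hpow : u⁻¹ * u ^ (-(n : ℤ)) = u ^ (-(n : ℤ) - 1) := by group
        rw [hpow]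
  · intro h
    intro t
    have h1 := h t 1
    simp only [zpow_one, (hu (2 * Real.pi)).unit_spec, Int.cast_one, mul_one] at h1
    have hder : deriv p (t + 2 * Real.pi) = p (2 * Real.pi) * deriv p t := by
      have hq : (fun s => p (s + 2 * Real.pi)) = fun s => p (2 * Real.pi) * p s := by
        funext s
        have := h s 1
        simpa [(hu (2 * Real.pi)).unit_spec] using this
      have hL := hshift t
      rw [hq] at hL
      have hR : HasDerivAt (fun s => p (2 * Real.pi) * p s)
          (p (2 * Real.pi) * deriv p t) t := (hd t).const_mul _
      exact hL.unique hR
    have hinv : ip (t + 2 * Real.pi) = ip t * ip (2 * Real.pi) := by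
      simp only [hip, h1]
      rw [← (hu t).unit_spec, ← (hu (2 * Real.pi)).unit_spec, ← Units.val_mul,
        Ring.inverse_unit, Ring.inverse_unit, Ring.inverse_unit, mul_inv_rev, Units.val_mul]
    show ip (t + 2 * Real.pi) * deriv p (t + 2 * Real.pi) = ip t * deriv p t
    rw [hder, hinv, mul_assoc, ← mul_assoc (ip (2 * Real.pi)), hipl, one_mul]
end

section
/- Let A be a complete normed unital ℝ-algebra, φ : ℝ → A a continuous map, and h : ℝ → A a differentiable map with h(0) = 1 and h(t) a unit of A for every t ∈ ℝ. If g : ℝ → A is differentiable with g(0) = 1 and deriv g t = g(t)·φ(t) for all t ∈ ℝ, then the pointwise product k(t) := g(t)·h(t) satisfies k(0) = 1 and deriv k t = k(t)·( h(t)⁻¹·φ(t)·h(t) + h(t)⁻¹·deriv h t ) for all t ∈ ℝ. -/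
/-- Gauge transformation of the Higgs-field holonomy equation: if `∂g = g·φ`
with `g 0 = 1`, and `h` is a differentiable unit-valued map with `h 0 = 1`,
then `k = g·h` satisfies `k 0 = 1` and `∂k = k·(Ad(h⁻¹)φ + h⁻¹ ∂h)`. -/
theorem higgs_holonomy_gauge_transform
    {A : Type*} [NormedRing A] [NormedAlgebra ℝ A] [CompleteSpace A]
    (φ : ℝ → A) (hφ : Continuous φ)
    (h : ℝ → A) (hh : Differentiable ℝ h) (h0 : h 0 = 1) (hu : ∀ t, IsUnit (h t))
    (g : ℝ → A) (hg : Differentiable ℝ g) (g0 : g 0 = 1)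
    (hode : ∀ t, deriv g t = g t * φ t) :
    g 0 * h 0 = 1 ∧
      ∀ t, deriv (fun s => g s * h s) t =
        (g t * h t) *
          (Ring.inverse (h t) * φ t * h t + Ring.inverse (h t) * deriv h t) := by
  have key : ∀ x t, (g t * h t) * (Ring.inverse (h t) * x) = g t * x := by
    intro x t
    rw [mul_assoc, ← mul_assoc (h t), Ring.mul_inverse_cancel _ (hu t), one_mul]
  refine ⟨by rw [g0, h0, one_mul], fun t => ?_⟩
  rw [deriv_fun_mul (hg t) (hh t), hode, mul_add, mul_assoc (Ring.inverse (h t)), key, key,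
    ← mul_assoc]
end

section
/- Let G be a connected Lie group, PG := { p : ℝ → G smooth | p(0) = 1 and p(t + 2π) = p(2π)·p(t) for all t ∈ ℝ }, ΩG := { γ : ℝ → G smooth | γ(0) = 1 and γ(t + 2π) = γ(t) for all t ∈ ℝ }, and let ℤ act on G × G × ℝ by n·(g, h, t) = (g, gⁿ·h, t + 2πn). Then: (i) the formula (p, g, t)·(γ, n) = (p·γ, γ(t)⁻¹·g, t + 2πn) defines a right action of the product group ΩG × ℤ on PG × G × ℝ; (ii) the map Ψ : PG × G × ℝ → (G × G × ℝ)/ℤ, Ψ(p, g, t) = [p(2π), p(t)·g, t], is invariant under this action; (iii) the induced map on the quotient (PG × G × ℝ)/(ΩG × ℤ) → (G × G × ℝ)/ℤ is a bijection, and it is equivariant for the right G-actions [p, g, t]·k = [p, g·k, t] and [g, h, t]·k = [g, h·k, t]. -/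
open scoped Manifold

/-- Membership in the path fibration `PG`: smooth `p : ℝ → G` with `p 0 = 1`
and `p (t + 2π) = p (2π) * p t` for all `t`. -/
def MemPathFib {E : Type*} [NormedAddCommGroup E] [NormedSpace ℝ E]
    {H : Type*} [TopologicalSpace H] (I : ModelWithCorners ℝ E H)
    {G : Type*} [TopologicalSpace G] [ChartedSpace H G] [Group G]
    (p : ℝ → G) : Prop :=
  ContMDiff 𝓘(ℝ, ℝ) I (⊤ : ℕ∞) p ∧ p 0 = 1 ∧
    ∀ t : ℝ, p (t + 2 * Real.pi) = p (2 * Real.pi) * p t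

/-- Membership in the based loop group `ΩG`: smooth `γ : ℝ → G` with `γ 0 = 1`
and `γ (t + 2π) = γ t` for all `t`. -/
def MemLoopGrp {E : Type*} [NormedAddCommGroup E] [NormedSpace ℝ E]
    {H : Type*} [TopologicalSpace H] (I : ModelWithCorners ℝ E H)
    {G : Type*} [TopologicalSpace G] [ChartedSpace H G] [Group G]
    (γ : ℝ → G) : Prop :=
  ContMDiff 𝓘(ℝ, ℝ) I (⊤ : ℕ∞) γ ∧ γ 0 = 1 ∧ ∀ t : ℝ, γ (t + 2 * Real.pi) = γ t

/-- The right action of `(γ, n) ∈ ΩG × ℤ` on a triple `(p, g, t)`: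
`(p, g, t)·(γ, n) = (p·γ, γ(t)⁻¹·g, t + 2πn)`. -/
noncomputable def caloronAct {G : Type*} [Group G]
    (x : (ℝ → G) × G × ℝ) (γ : ℝ → G) (n : ℤ) : (ℝ → G) × G × ℝ :=
  (fun t => x.1 t * γ t, (γ x.2.2)⁻¹ * x.2.1, x.2.2 + 2 * Real.pi * n)

/-- The relation on `G × G × ℝ` generated by the `ℤ`-action
`n·(g, h, t) = (g, gⁿh, t + 2πn)`, whose quotient is `~PG`. -/
def zRel {G : Type*} [Group G] (a b : G × G × ℝ) : Prop :=
  ∃ n : ℤ, ((a.1, a.1 ^ n * a.2.1, a.2.2 + 2 * Real.pi * n) : G × G × ℝ) = b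

/-- The map `Ψ(p, g, t) = (p(2π), p(t)·g, t)` inducing `𝒞(PG) ≅ ~PG`. -/
noncomputable def caloronPsi {G : Type*} [Group G]
    (x : (ℝ → G) × G × ℝ) : G × G × ℝ :=
  (x.1 (2 * Real.pi), x.1 x.2.2 * x.2.1, x.2.2)

/-- The relation on `PG × G × ℝ` generated by the right `ΩG × ℤ`-action, whose
quotient is the total space of the caloron transform `𝒞(PG)`. -/
def caloronDomRel {E : Type*} [NormedAddCommGroup E] [NormedSpace ℝ E]
    {H : Type*} [TopologicalSpace H] (I : ModelWithCorners ℝ E H)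
    (G : Type*) [TopologicalSpace G] [ChartedSpace H G] [Group G]
    (x y : {x : (ℝ → G) × G × ℝ // MemPathFib I x.1}) : Prop :=
  ∃ γ : ℝ → G, MemLoopGrp I γ ∧ ∃ n : ℤ, caloronAct x.val γ n = y.val

section CaloronAux

open Set Filter

variable {E : Type*} [NormedAddCommGroup E] [NormedSpace ℝ E]
    {H : Type*} [TopologicalSpace H] {I : ModelWithCorners ℝ E H}
    {G : Type*} [TopologicalSpace G] [ChartedSpace H G] [Group G]

theorem caloron_pathFib_add_zpow {p : ℝ → G} (hp : MemPathFib I p) (n : ℤ) :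
    ∀ t : ℝ, p (t + 2 * Real.pi * n) = p (2 * Real.pi) ^ n * p t := by
  induction n using Int.induction_on with
  | zero => intro t; simp
  | succ k ih =>
      intro t
      have h1 : t + 2 * Real.pi * ((k : ℤ) + 1 : ℤ) =
          (t + 2 * Real.pi * (k : ℤ)) + 2 * Real.pi := by push_cast; ring
      rw [h1, hp.2.2, ih t, ← mul_assoc]
      congr 1
      rw [show ((k : ℤ) + 1 : ℤ) = 1 + (k : ℤ) by ring, zpow_one_add]
  | pred k ih =>
      intro t
      have h1 : (t + 2 * Real.pi * ((-(k : ℤ) - 1 : ℤ) : ℝ)) + 2 * Real.pi =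
          t + 2 * Real.pi * ((-(k : ℤ) : ℤ) : ℝ) := by push_cast; ring
      have h2 := hp.2.2 (t + 2 * Real.pi * ((-(k : ℤ) - 1 : ℤ) : ℝ))
      rw [h1, ih t] at h2
      have h3 := congrArg (fun z => (p (2 * Real.pi))⁻¹ * z) h2
      simp only [inv_mul_cancel_left] at h3
      rw [← h3, ← mul_assoc]
      congr 1
      rw [show (-(k : ℤ) - 1 : ℤ) = -1 + -(k : ℤ) by ring, zpow_add, zpow_neg_one]

theorem caloron_loop_two_pi {γ : ℝ → G} (hγ : MemLoopGrp I γ) :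
    γ (2 * Real.pi) = 1 := by
  have h := hγ.2.2 0
  rw [zero_add] at h
  rw [h, hγ.2.1]

theorem caloron_loop_pathFib {γ : ℝ → G} (hγ : MemLoopGrp I γ) : MemPathFib I γ :=
  ⟨hγ.1, hγ.2.1, fun t => by rw [hγ.2.2 t, caloron_loop_two_pi hγ, one_mul]⟩

theorem caloron_loop_add_zpow {γ : ℝ → G} (hγ : MemLoopGrp I γ) (n : ℤ) (t : ℝ) :
    γ (t + 2 * Real.pi * n) = γ t := by
  rw [caloron_pathFib_add_zpow (caloron_loop_pathFib hγ) n t, caloron_loop_two_pi hγ,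
    one_zpow, one_mul]

/-- Smooth-based-path reachability relation on a Lie group. -/
def CaloronSRel {E : Type*} [NormedAddCommGroup E] [NormedSpace ℝ E]
    {H : Type*} [TopologicalSpace H] (I : ModelWithCorners ℝ E H)
    {G : Type*} [TopologicalSpace G] [ChartedSpace H G] (a b : G) : Prop :=
  ∃ f : ℝ → G, ContMDiff 𝓘(ℝ, ℝ) I (⊤ : ℕ∞) f ∧ (∀ t : ℝ, t ≤ 0 → f t = a) ∧
    ∀ t : ℝ, 1 ≤ t → f t = b

theorem CaloronSRel.refl (a : G) : CaloronSRel I a a :=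
  ⟨fun _ => a, contMDiff_const, fun _ _ => rfl, fun _ _ => rfl⟩

theorem CaloronSRel.symm {a b : G} (h : CaloronSRel I a b) : CaloronSRel I b a := by
  obtain ⟨f, hf, h0, h1⟩ := h
  refine ⟨fun t => f (1 - t), hf.comp ((contDiff_const.sub contDiff_id).contMDiff), ?_, ?_⟩
  · intro t ht; exact h1 _ (by linarith)
  · intro t ht; exact h0 _ (by linarith)

variable [LieGroup I (⊤ : ℕ∞) G]

theorem CaloronSRel.mul {a b c d : G} (h : CaloronSRel I a b) (h' : CaloronSRel I c d) :
    CaloronSRel I (a * c) (b * d) := by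
  obtain ⟨f, hf, h0, h1⟩ := h
  obtain ⟨f', hf', h0', h1'⟩ := h'
  exact ⟨fun t => f t * f' t, hf.mul hf',
    fun t ht => by show f t * f' t = _; rw [h0 t ht, h0' t ht],
    fun t ht => by show f t * f' t = _; rw [h1 t ht, h1' t ht]⟩

theorem CaloronSRel.inv {a b : G} (h : CaloronSRel I a b) :
    CaloronSRel I a⁻¹ b⁻¹ := by
  obtain ⟨f, hf, h0, h1⟩ := h
  exact ⟨fun t => (f t)⁻¹, hf.inv,
    fun t ht => by show (f t)⁻¹ = _; rw [h0 t ht],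
    fun t ht => by show (f t)⁻¹ = _; rw [h1 t ht]⟩

theorem CaloronSRel.trans {a b c : G} (h : CaloronSRel I a b) (h' : CaloronSRel I b c) :
    CaloronSRel I a c := by
  obtain ⟨f, hf, h0, h1⟩ := h
  obtain ⟨f', hf', h0', h1'⟩ := h'
  refine ⟨fun t => f (2 * t) * b⁻¹ * f' (2 * t - 1),
    ((hf.comp ((contDiff_const.mul contDiff_id).contMDiff)).mul contMDiff_const).mul
      (hf'.comp (((contDiff_const.mul contDiff_id).sub contDiff_const).contMDiff)), ?_, ?_⟩
  · intro t ht
    show f (2 * t) * b⁻¹ * f' (2 * t - 1) = _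
    rw [h0 (2 * t) (by linarith), h0' (2 * t - 1) (by linarith)]
    simp
  · intro t ht
    show f (2 * t) * b⁻¹ * f' (2 * t - 1) = _
    rw [h1 (2 * t) (by linarith), h1' (2 * t - 1) (by linarith)]
    simp

theorem caloron_exists_nbhd_rel :
    ∃ (x : G) (A : Set G), IsOpen A ∧ x ∈ A ∧ ∀ y ∈ A, CaloronSRel I x y := by
  obtain ⟨z, hz⟩ := interior_extChartAt_target_nonempty I (1 : G)
  set e := extChartAt I (1 : G) with he
  obtain ⟨r, rpos, hball⟩ := Metric.isOpen_iff.mp isOpen_interior z hz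
  have hsub : Metric.ball z r ⊆ e.target := fun w hw => interior_subset (hball hw)
  refine ⟨e.symm z, e.symm '' Metric.ball z r, ?_,
    ⟨z, Metric.mem_ball_self rpos, rfl⟩, ?_⟩
  · have himg : e.symm '' Metric.ball z r = e.source ∩ e ⁻¹' Metric.ball z r := by
      ext y
      constructor
      · rintro ⟨w, hw, rfl⟩
        exact ⟨e.map_target (hsub hw), by rwa [Set.mem_preimage, e.right_inv (hsub hw)]⟩
      · rintro ⟨hy, hy'⟩
        exact ⟨e y, hy', e.left_inv hy⟩
    rw [himg]
    exact (continuousOn_extChartAt (1 : G)).isOpen_inter_preimage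
      (isOpen_extChartAt_source (1 : G)) Metric.isOpen_ball
  · rintro y ⟨w, hw, rfl⟩
    have hmaps : ∀ t : ℝ, z + Real.smoothTransition t • (w - z) ∈ e.target := by
      intro t
      apply hsub
      rw [Metric.mem_ball, dist_eq_norm, add_sub_cancel_left, norm_smul, Real.norm_eq_abs,
        abs_of_nonneg (Real.smoothTransition.nonneg t)]
      calc Real.smoothTransition t * ‖w - z‖ ≤ ‖w - z‖ :=
            mul_le_of_le_one_left (norm_nonneg _) (Real.smoothTransition.le_one t)
        _ < r := by rwa [Metric.mem_ball, dist_eq_norm] at hw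
    have hc : ContMDiff 𝓘(ℝ, ℝ) 𝓘(ℝ, E) (⊤ : ℕ∞)
        (fun t => z + Real.smoothTransition t • (w - z)) :=
      (contDiff_const.add (Real.smoothTransition.contDiff.smul contDiff_const)).contMDiff
    refine ⟨fun t => e.symm (z + Real.smoothTransition t • (w - z)),
      (contMDiffOn_extChartAt_symm (1 : G)).comp_contMDiff hc hmaps, ?_, ?_⟩
    · intro t ht
      show e.symm (z + Real.smoothTransition t • (w - z)) = _
      rw [Real.smoothTransition.zero_of_nonpos ht, zero_smul, add_zero]
    · intro t ht
      show e.symm (z + Real.smoothTransition t • (w - z)) = _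
      rw [Real.smoothTransition.one_of_one_le ht, one_smul, add_sub_cancel]

variable [ConnectedSpace G]

theorem caloron_srel_one (g : G) : CaloronSRel I 1 g := by
  obtain ⟨x, A, hA, hxA, hreach⟩ := caloron_exists_nbhd_rel (I := I) (G := G)
  haveI : ContinuousMul G := continuousMul_of_contMDiffMul I (⊤ : ℕ∞)
  set S : Set G := {g : G | CaloronSRel I 1 g} with hS
  set U : Set G := (fun y => y * x) ⁻¹' A with hUdef
  have hUopen : IsOpen U := hA.preimage (continuous_mul_right x)
  have h1U : (1 : G) ∈ U := by
    simp only [hUdef, Set.mem_preimage, one_mul]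
    exact hxA
  have hUS : U ⊆ S := by
    intro u hu
    have h1 : CaloronSRel I x (u * x) := hreach _ hu
    have h2 : CaloronSRel I (x * x⁻¹) ((u * x) * x⁻¹) := h1.mul (CaloronSRel.refl x⁻¹)
    show CaloronSRel I 1 u
    simpa using h2
  have hSopen : IsOpen S := by
    rw [isOpen_iff_mem_nhds]
    intro s hs
    rw [mem_nhds_iff]
    refine ⟨(fun y => s⁻¹ * y) ⁻¹' U, ?_, hUopen.preimage (continuous_mul_left s⁻¹), ?_⟩
    · intro y hy
      have h1 : CaloronSRel I 1 (s⁻¹ * y) := hUS hy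
      have h2 : CaloronSRel I (1 * 1) (s * (s⁻¹ * y)) := hs.mul h1
      show CaloronSRel I 1 y
      simpa using h2
    · simp [h1U]
  have hSclosed : IsClosed S := by
    rw [← isOpen_compl_iff, isOpen_iff_mem_nhds]
    intro a ha
    rw [mem_nhds_iff]
    refine ⟨(fun y => a⁻¹ * y) ⁻¹' U, ?_, hUopen.preimage (continuous_mul_left a⁻¹), ?_⟩
    · intro y hy
      intro hyS
      apply ha
      have h1 : CaloronSRel I 1 (a⁻¹ * y) := hUS hy
      have h2 : CaloronSRel I 1 (a⁻¹ * y)⁻¹ := by simpa using h1.inv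
      have h3 : CaloronSRel I (1 * 1) (y * (a⁻¹ * y)⁻¹) := hyS.mul h2
      have h4 : y * (a⁻¹ * y)⁻¹ = a := by group
      rw [h4, one_mul] at h3
      exact h3
    · simp [h1U]
  have h1S : (1 : G) ∈ S := CaloronSRel.refl 1
  rcases isClopen_iff.mp ⟨hSclosed, hSopen⟩ with h | h
  · exact absurd (h ▸ h1S) (Set.notMem_empty 1)
  · have : g ∈ S := h ▸ Set.mem_univ g
    exact this

theorem caloron_exists_pathFib (g : G) :
    ∃ p : ℝ → G, MemPathFib I p ∧ p (2 * Real.pi) = g := by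
  obtain ⟨f, hf, hf0, hf1⟩ := caloron_srel_one (I := I) g
  have two_pi_pos : (0 : ℝ) < 2 * Real.pi := Real.two_pi_pos
  have hpi3 : (3 : ℝ) < Real.pi := Real.pi_gt_three
  have h2 : (0 : ℝ) < 2 * Real.pi - 2 := by linarith
  set F : ℝ → G := fun t => f (Real.smoothTransition ((t - 1) / (2 * Real.pi - 2))) with hFdef
  have hF : ContMDiff 𝓘(ℝ, ℝ) I (⊤ : ℕ∞) F :=
    hf.comp ((Real.smoothTransition.contDiff.comp
      ((contDiff_id.sub contDiff_const).div_const _)).contMDiff)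
  have hF1 : ∀ t : ℝ, t ≤ 1 → F t = 1 := by
    intro t ht
    have hle : (t - 1) / (2 * Real.pi - 2) ≤ 0 :=
      div_nonpos_of_nonpos_of_nonneg (by linarith) h2.le
    rw [hFdef]
    simp only
    rw [Real.smoothTransition.zero_of_nonpos hle]
    exact hf0 0 le_rfl
  have hFg : ∀ t : ℝ, 2 * Real.pi - 1 ≤ t → F t = g := by
    intro t ht
    have hle : (1 : ℝ) ≤ (t - 1) / (2 * Real.pi - 2) := (le_div_iff₀ h2).mpr (by linarith)
    rw [hFdef]
    simp only
    rw [Real.smoothTransition.one_of_one_le hle]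
    exact hf1 1 le_rfl
  set p : ℝ → G := fun t => g ^ (⌊t / (2 * Real.pi)⌋) * F (t - 2 * Real.pi * ⌊t / (2 * Real.pi)⌋)
    with hpdef
  have hfloor : ∀ (n : ℤ) (t : ℝ), 2 * Real.pi * n ≤ t → t < 2 * Real.pi * n + 2 * Real.pi →
      ⌊t / (2 * Real.pi)⌋ = n := by
    intro n t h1 h2'
    rw [Int.floor_eq_iff]
    constructor
    · rw [le_div_iff₀ two_pi_pos]; linarith
    · rw [div_lt_iff₀ two_pi_pos]; push_cast; linarith
  have hagree : ∀ (n : ℤ) (t : ℝ), 2 * Real.pi * n - 1 < t → t < 2 * Real.pi * n + 2 * Real.pi →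
      p t = g ^ n * F (t - 2 * Real.pi * n) := by
    intro n t hl hr
    by_cases hc : 2 * Real.pi * n ≤ t
    · rw [hpdef]; simp only; rw [hfloor n t hc hr]
    · push_neg at hc
      have hfl : ⌊t / (2 * Real.pi)⌋ = n - 1 := by
        apply hfloor (n - 1) t
        · push_cast; linarith
        · push_cast; linarith
      rw [hpdef]
      simp only
      rw [hfl]
      have hFg' : F (t - 2 * Real.pi * ((n : ℤ) - 1 : ℤ)) = g := by
        apply hFg; push_cast; linarith
      have hF1' : F (t - 2 * Real.pi * n) = 1 := by
        apply hF1; linarith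
      rw [hFg', hF1', mul_one]
      group
  have hpsmooth : ContMDiff 𝓘(ℝ, ℝ) I (⊤ : ℕ∞) p := by
    intro t₀
    set n : ℤ := ⌊(t₀ + 1 / 2) / (2 * Real.pi)⌋ with hn
    have hb1 : (n : ℝ) * (2 * Real.pi) ≤ t₀ + 1 / 2 :=
      (le_div_iff₀ two_pi_pos).mp (Int.floor_le _)
    have hb2 : t₀ + 1 / 2 < ((n : ℝ) + 1) * (2 * Real.pi) := by
      have := Int.lt_floor_add_one ((t₀ + 1 / 2) / (2 * Real.pi))
      have h' := (div_lt_iff₀ two_pi_pos).mp this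
      push_cast at h' ⊢
      linarith
    have hIoo : t₀ ∈ Set.Ioo (2 * Real.pi * n - 1) (2 * Real.pi * n + 2 * Real.pi) := by
      constructor <;> [nlinarith; nlinarith]
    have hq : ContMDiff 𝓘(ℝ, ℝ) I (⊤ : ℕ∞) (fun t => g ^ n * F (t - 2 * Real.pi * n)) :=
      contMDiff_const.mul (hF.comp ((contDiff_id.sub contDiff_const).contMDiff))
    exact (hq t₀).congr_of_eventuallyEq
      (Filter.eventuallyEq_of_mem (Ioo_mem_nhds hIoo.1 hIoo.2)
        (fun t ht => hagree n t ht.1 ht.2))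
  have hp0 : p 0 = 1 := by
    rw [hpdef]
    simp only
    rw [zero_div, Int.floor_zero]
    simp only [zpow_zero, one_mul, Int.cast_zero, mul_zero, sub_zero]
    exact hF1 0 (by norm_num)
  have hfloor1 : ⌊(2 * Real.pi) / (2 * Real.pi)⌋ = (1 : ℤ) := by
    rw [div_self (ne_of_gt two_pi_pos), Int.floor_one]
  have hp2pi : p (2 * Real.pi) = g := by
    rw [hpdef]
    simp only
    rw [hfloor1]
    rw [show (2 * Real.pi) - 2 * Real.pi * ((1 : ℤ) : ℝ) = 0 by push_cast; ring]
    rw [hF1 0 (by norm_num), zpow_one, mul_one]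
  refine ⟨p, ⟨hpsmooth, hp0, ?_⟩, hp2pi⟩
  intro t
  have hkey : ⌊(t + 2 * Real.pi) / (2 * Real.pi)⌋ = ⌊t / (2 * Real.pi)⌋ + 1 := by
    rw [show (t + 2 * Real.pi) / (2 * Real.pi) = t / (2 * Real.pi) + 1 by
      field_simp]
    exact Int.floor_add_one _
  rw [hp2pi, hpdef]
  simp only
  rw [hkey]
  rw [show t + 2 * Real.pi - 2 * Real.pi * ((⌊t / (2 * Real.pi)⌋ : ℤ) + 1 : ℤ)
      = t - 2 * Real.pi * ⌊t / (2 * Real.pi)⌋ by push_cast; ring]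
  rw [show (⌊t / (2 * Real.pi)⌋ + 1 : ℤ) = 1 + ⌊t / (2 * Real.pi)⌋ by ring, zpow_one_add, mul_assoc]

end CaloronAux

/-- Example 3.9 of the paper, at the set level: (i) `(p, g, t)·(γ, n) =
(p·γ, γ(t)⁻¹g, t + 2πn)` defines a right action of `ΩG × ℤ` on `PG × G × ℝ`;
(ii) `Ψ(p, g, t) = [p(2π), p(t)g, t]` is invariant under this action;
(iii) the induced map `(PG × G × ℝ)/(ΩG × ℤ) → (G × G × ℝ)/ℤ` is a bijection,
equivariant for the right `G`-actions `[p, g, t]·k = [p, gk, t]` and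
`[g, h, t]·k = [g, hk, t]`. -/
theorem caloron_transform_pathFibration_iso
    {E : Type*} [NormedAddCommGroup E] [NormedSpace ℝ E]
    {H : Type*} [TopologicalSpace H] (I : ModelWithCorners ℝ E H)
    {G : Type*} [TopologicalSpace G] [ChartedSpace H G] [Group G] [LieGroup I (⊤ : ℕ∞) G]
    [ConnectedSpace G] :
    -- (i) a right action of the product group ΩG × ℤ on PG × G × ℝ:
    -- identity, compatibility, and preservation of PG × G × ℝ
    ((∀ x : (ℝ → G) × G × ℝ, caloronAct x (fun _ => (1 : G)) (0 : ℤ) = x) ∧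
      (∀ (x : (ℝ → G) × G × ℝ) (γ₁ γ₂ : ℝ → G), MemLoopGrp I γ₁ → MemLoopGrp I γ₂ →
        ∀ n₁ n₂ : ℤ,
          caloronAct (caloronAct x γ₁ n₁) γ₂ n₂ =
            caloronAct x (fun t => γ₁ t * γ₂ t) (n₁ + n₂)) ∧
      (∀ x : (ℝ → G) × G × ℝ, MemPathFib I x.1 → ∀ γ : ℝ → G, MemLoopGrp I γ →
        ∀ n : ℤ, MemPathFib I (caloronAct x γ n).1)) ∧
    -- (ii) Ψ is invariant under the action (equality in the quotient (G × G × ℝ)/ℤ)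
    (∀ x : (ℝ → G) × G × ℝ, MemPathFib I x.1 → ∀ γ : ℝ → G, MemLoopGrp I γ →
      ∀ n : ℤ,
        Quot.mk zRel (caloronPsi (caloronAct x γ n)) = Quot.mk zRel (caloronPsi x)) ∧
    -- (iii) the induced map on the quotients is a bijection, equivariant for
    -- the right G-actions
    (∃ F : Quot (caloronDomRel I G) → Quot (zRel (G := G)),
      (∀ x : {x : (ℝ → G) × G × ℝ // MemPathFib I x.1},
          F (Quot.mk _ x) = Quot.mk _ (caloronPsi x.val)) ∧
      Function.Bijective F ∧
      (∀ (x : {x : (ℝ → G) × G × ℝ // MemPathFib I x.1}) (k : G),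
          F (Quot.mk _ ⟨(x.val.1, x.val.2.1 * k, x.val.2.2), x.prop⟩) =
            Quot.mk _
              ((caloronPsi x.val).1, (caloronPsi x.val).2.1 * k,
                (caloronPsi x.val).2.2))) := by
  classical
  have hzero : ∀ x : (ℝ → G) × G × ℝ, MemPathFib I x.1 → ∀ γ : ℝ → G, MemLoopGrp I γ →
      ∀ n : ℤ, Quot.mk zRel (caloronPsi (caloronAct x γ n)) = Quot.mk zRel (caloronPsi x) := by
    intro x hx γ hγ n
    refine (Quot.sound ⟨n, ?_⟩).symm
    simp only [caloronPsi, caloronAct, Prod.mk.injEq]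
    refine ⟨?_, ?_, trivial⟩
    · rw [caloron_loop_two_pi hγ, mul_one]
    · rw [caloron_pathFib_add_zpow hx n x.2.2, caloron_loop_add_zpow hγ n x.2.2]
      group
  refine ⟨⟨?_, ?_, ?_⟩, hzero, ?_⟩
  · intro x
    simp [caloronAct]
  · intro x γ₁ γ₂ h₁ h₂ n₁ n₂
    simp only [caloronAct, Prod.mk.injEq]
    refine ⟨funext fun t => mul_assoc _ _ _, ?_, by push_cast; ring⟩
    rw [caloron_loop_add_zpow h₂ n₁ x.2.2]
    group
  · intro x hx γ hγ n
    refine ⟨hx.1.mul hγ.1, ?_, ?_⟩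
    · show x.1 0 * γ 0 = 1
      rw [hx.2.1, hγ.2.1, one_mul]
    · intro t
      show x.1 (t + 2 * Real.pi) * γ (t + 2 * Real.pi) =
        x.1 (2 * Real.pi) * γ (2 * Real.pi) * (x.1 t * γ t)
      rw [hx.2.2 t, hγ.2.2 t, caloron_loop_two_pi hγ, mul_one, mul_assoc]
  · -- part (iii)
    have hequiv : Equivalence (zRel (G := G)) := by
      constructor
      · intro a
        exact ⟨0, by simp⟩
      · rintro ⟨a1, a2, a3⟩ b ⟨n, rfl⟩
        refine ⟨-n, ?_⟩
        simp only [Prod.mk.injEq]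
        refine ⟨trivial, by group, by push_cast; ring⟩
      · rintro ⟨a1, a2, a3⟩ b c ⟨n, rfl⟩ ⟨m, rfl⟩
        refine ⟨n + m, ?_⟩
        simp only [Prod.mk.injEq]
        refine ⟨trivial, by group, by push_cast; ring⟩
    have hsound : ∀ a b : {x : (ℝ → G) × G × ℝ // MemPathFib I x.1}, caloronDomRel I G a b →
        Quot.mk (zRel (G := G)) (caloronPsi a.val) = Quot.mk (zRel (G := G)) (caloronPsi b.val) := by
      rintro a b ⟨γ, hγ, n, heq⟩
      rw [← heq]
      exact (hzero a.val a.prop γ hγ n).symm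
    refine ⟨Quot.lift (fun x : {x : (ℝ → G) × G × ℝ // MemPathFib I x.1} =>
        Quot.mk (zRel (G := G)) (caloronPsi x.val)) hsound, fun x => rfl, ⟨?_, ?_⟩, ?_⟩
    · -- injective
      intro qa qb h
      obtain ⟨a, rfl⟩ := Quot.exists_rep qa
      obtain ⟨b, rfl⟩ := Quot.exists_rep qb
      have h' : Quot.mk (zRel (G := G)) (caloronPsi a.val) =
          Quot.mk (zRel (G := G)) (caloronPsi b.val) := h
      have hz : zRel (caloronPsi a.val) (caloronPsi b.val) :=
        hequiv.eqvGen_iff.mp (Quot.eq.mp h')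
      obtain ⟨n, heq⟩ := hz
      simp only [caloronPsi, Prod.mk.injEq] at heq
      obtain ⟨e1, e2, e3⟩ := heq
      apply Quot.sound
      refine ⟨fun u => (a.val.1 u)⁻¹ * b.val.1 u,
        ⟨a.prop.1.inv.mul b.prop.1, ?_, ?_⟩, n, ?_⟩
      · show (a.val.1 0)⁻¹ * b.val.1 0 = 1
        rw [a.prop.2.1, b.prop.2.1, inv_one, one_mul]
      · intro u
        show (a.val.1 (u + 2 * Real.pi))⁻¹ * b.val.1 (u + 2 * Real.pi) =
          (a.val.1 u)⁻¹ * b.val.1 u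
        rw [a.prop.2.2 u, b.prop.2.2 u, ← e1]
        group
      · have hqs : b.val.1 b.val.2.2 = a.val.1 (2 * Real.pi) ^ n * b.val.1 a.val.2.2 := by
          rw [← e3, caloron_pathFib_add_zpow b.prop n a.val.2.2, ← e1]
        rw [hqs, mul_assoc] at e2
        have key : a.val.1 a.val.2.2 * a.val.2.1 = b.val.1 a.val.2.2 * b.val.2.1 :=
          mul_left_cancel e2
        refine Prod.ext ?_ (Prod.ext ?_ ?_)
        · show (fun u => a.val.1 u * ((a.val.1 u)⁻¹ * b.val.1 u)) = b.val.1
          funext u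
          group
        · show ((a.val.1 a.val.2.2)⁻¹ * b.val.1 a.val.2.2)⁻¹ * a.val.2.1 = b.val.2.1
          have hb : b.val.2.1 = (b.val.1 a.val.2.2)⁻¹ * (a.val.1 a.val.2.2 * a.val.2.1) := by
            rw [key]
            group
          rw [hb]
          group
        · exact e3
    · -- surjective
      intro qb
      obtain ⟨b, rfl⟩ := Quot.exists_rep qb
      obtain ⟨p, hp, hp2pi⟩ := caloron_exists_pathFib (I := I) b.1
      refine ⟨Quot.mk _ ⟨(p, (p b.2.2)⁻¹ * b.2.1, b.2.2), hp⟩, ?_⟩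
      show Quot.mk (zRel (G := G)) (caloronPsi (p, (p b.2.2)⁻¹ * b.2.1, b.2.2)) =
        Quot.mk (zRel (G := G)) b
      apply congrArg
      simp only [caloronPsi]
      rw [hp2pi, mul_inv_cancel_left]
    · -- equivariance
      intro x k
      exact congrArg (Quot.mk (zRel (G := G))) (by simp [caloronPsi, mul_assoc])
end
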